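/- Let 1 < p < n and α ∈ ℝ. There exists a constant C > 0 such that for every u with ⟨x⟩^{α−1} u ∈ L^p(ℝⁿ) and ⟨x⟩^α ∇u ∈ L^p(ℝⁿ), one has ⟨x⟩^α u ∈ L^{p*}(ℝⁿ) with ‖⟨x⟩^α u‖_{L^{p*}} ≤ C (‖⟨x⟩^{α−1} u‖_{L^p} + ‖⟨x⟩^α ∇u‖_{L^p}), where 1/p* = 1/p − 1/n. -/

import Mathlib

open MeasureTheory
open scoped ENNReal NNReal BigOperators

/-- The Japanese bracket weight `⟨x⟩ = (|x|² + 1)^{1/2}` on `ℝⁿ`. -/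
noncomputable def wt {n : ℕ} (x : Fin n → ℝ) : ℝ := Real.sqrt ((∑ i, x i ^ 2) + 1)

open MeasureTheory Set Function Filter
open scoped ENNReal NNReal BigOperators Topology

/-- FTC bound for everywhere-differentiable compactly supported real functions. -/
lemma ftc_nnnorm_le {f : ℝ → ℝ} (hf : Differentiable ℝ f) (h2f : HasCompactSupport f) (x : ℝ) :
    (‖f x‖₊ : ℝ≥0∞) ≤ ∫⁻ y in Iic x, ‖deriv f y‖₊ := by
  by_cases h : (∫⁻ y in Iic x, ‖deriv f y‖₊) = ∞
  · simp [h]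
  have hmeas : Measurable (deriv f) := measurable_deriv f
  have hint : IntegrableOn (deriv f) (Iic x) := by
    refine ⟨hmeas.aestronglyMeasurable.restrict, ?_⟩
    rw [HasFiniteIntegral]
    exact Ne.lt_top h
  have htend : Tendsto f atBot (𝓝 0) := by
    rw [hasCompactSupport_iff_eventuallyEq, Filter.coclosedCompact_eq_cocompact] at h2f
    exact h2f.filter_mono _root_.atBot_le_cocompact |>.tendsto
  have key : ∫ y in Iic x, deriv f y = f x - 0 :=
    MeasureTheory.integral_Iic_of_hasDerivAt_of_tendsto'
      (fun y _ => (hf y).hasDerivAt) hint htend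
  rw [sub_zero] at key
  calc (‖f x‖₊ : ℝ≥0∞) = ‖∫ y in Iic x, deriv f y‖₊ := by rw [key]
    _ ≤ ∫⁻ y in Iic x, ‖deriv f y‖₊ := enorm_integral_le_lintegral_enorm _

open Finset in
/-- GNS inequality, `L¹` endpoint, for differentiable compactly supported functions. -/
theorem my_lintegral_pow_le {ι : Type*} [Fintype ι] [DecidableEq ι]
    {p : ℝ} (hp : Real.HolderConjugate (Fintype.card ι) p)
    {u : (ι → ℝ) → ℝ} (hu : Differentiable ℝ u)
    (h2u : HasCompactSupport u) :
    ∫⁻ x, (‖u x‖₊ : ℝ≥0∞) ^ p ≤ (∫⁻ x, ‖fderiv ℝ u x‖₊) ^ p := by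
  classical
  have : (1 : ℝ) ≤ ↑(Fintype.card ι) - 1 := by
    have hι : (2 : ℝ) ≤ Fintype.card ι := by exact_mod_cast hp.lt
    linarith
  have hmf : Measurable fun x => (‖fderiv ℝ u x‖₊ : ℝ≥0∞) := (measurable_fderiv ℝ u).enorm
  calc ∫⁻ x, (‖u x‖₊ : ℝ≥0∞) ^ p
      = ∫⁻ x, ((‖u x‖₊ : ℝ≥0∞) ^ (1 / (Fintype.card ι - 1 : ℝ))) ^ (Fintype.card ι : ℝ) := by
        congr! 2 with x
        rw [← ENNReal.rpow_mul, hp.conjugate_eq]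
        field_simp
    _ = ∫⁻ x, ∏ _i : ι, (‖u x‖₊ : ℝ≥0∞) ^ (1 / (Fintype.card ι - 1 : ℝ)) := by
        congr! 2 with x
        simp_rw [prod_const, card_univ]
        norm_cast
    _ ≤ ∫⁻ x, ∏ i, (∫⁻ xᵢ, ‖fderiv ℝ u (update x i xᵢ)‖₊) ^ ((1 : ℝ) / (Fintype.card ι - 1 : ℝ)) := ?_
    _ ≤ (∫⁻ x, ‖fderiv ℝ u x‖₊) ^ p := by
        apply MeasureTheory.lintegral_prod_lintegral_pow_le _ hp hmf
  gcongr with x i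
  calc (‖u x‖₊ : ℝ≥0∞)
    _ ≤ ∫⁻ xᵢ in Iic (x i), ‖deriv (u ∘ update x i) xᵢ‖₊ := by
        refine le_trans (by simp) (ftc_nnnorm_le ?_ ?_ (x i))
        · exact hu.comp ((contDiff_update 1 x i).differentiable one_ne_zero)
        · exact h2u.comp_isClosedEmbedding (isClosedEmbedding_update x i)
    _ ≤ ∫⁻ xᵢ, (‖fderiv ℝ u (update x i xᵢ)‖₊ : ℝ≥0∞) := ?_
  gcongr with y
  · exact Measure.restrict_le_self
  calc ‖deriv (u ∘ update x i) y‖₊ = ‖fderiv ℝ u (update x i y) (deriv (update x i) y)‖₊ := by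
        rw [fderiv_comp_deriv _ (hu _)
          (hasDerivAt_update x i y).differentiableAt]
    _ ≤ ‖fderiv ℝ u (update x i y)‖₊ * ‖deriv (update x i) y‖₊ :=
        ContinuousLinearMap.le_opNNNorm ..
    _ ≤ ‖fderiv ℝ u (update x i y)‖₊ := by simp [deriv_update, Pi.nnnorm_single]

theorem my_one {ι : Type*} [Fintype ι] [DecidableEq ι] {u : (ι → ℝ) → ℝ}
    (hu : Differentiable ℝ u) (h2u : HasCompactSupport u)
    {q : ℝ≥0} (hq : NNReal.HolderConjugate (Fintype.card ι) q) :
    eLpNorm u q volume ≤ eLpNorm (fderiv ℝ u) 1 volume := by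
  have h0q : 0 < (q : ℝ) := hq.coe.symm.pos
  rw [eLpNorm_one_eq_lintegral_enorm,
    ← ENNReal.rpow_le_rpow_iff h0q, eLpNorm_nnreal_pow_eq_lintegral hq.symm.pos.ne']
  exact my_lintegral_pow_le hq.coe hu h2u

open NNReal in
theorem my_gns (ι : Type*) [Fintype ι] [DecidableEq ι]
    {p p' : ℝ≥0} (hp : 1 ≤ p) (hcard : 0 < Fintype.card ι)
    (hp' : (p' : ℝ)⁻¹ = (p : ℝ)⁻¹ - (Fintype.card ι : ℝ)⁻¹) :
    ∃ C : ℝ≥0, 0 < C ∧ ∀ u : (ι → ℝ) → ℝ, Differentiable ℝ u → HasCompactSupport u →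
      eLpNorm u p' volume ≤ C * eLpNorm (fderiv ℝ u) p volume := by
  set μ : Measure (ι → ℝ) := volume with hμ
  set n := Fintype.card ι with hn0
  let γ : ℝ≥0 := ((p : ℝ) * ((n : ℝ) - 1) / ((n : ℝ) - p)).toNNReal
  refine ⟨max 1 γ, lt_of_lt_of_le one_pos (le_max_left _ _), fun u hu h2u => ?_⟩
  by_cases hp'0 : p' = 0
  · simp [hp'0]
  let n' := NNReal.conjExponent n
  have h2p : (p : ℝ) < n := by
    have : 0 < (p : ℝ)⁻¹ - (n : ℝ)⁻¹ :=
      NNReal.coe_lt_coe.mpr (pos_iff_ne_zero.mpr (inv_ne_zero hp'0)) |>.trans_eq hp'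
    rwa [sub_pos,
      inv_lt_inv₀ _ (zero_lt_one.trans_le (NNReal.coe_le_coe.mpr hp))] at this
    exact_mod_cast hcard
  have h0n : 2 ≤ n := Nat.succ_le_of_lt <| Nat.one_lt_cast.mp <| hp.trans_lt h2p
  have hn : NNReal.HolderConjugate n n' := .conjExponent (by norm_cast)
  have h1n : 1 ≤ (n : ℝ≥0) := hn.lt.le
  have h2n : (0 : ℝ) < n - 1 := by simp_rw [sub_pos]; exact hn.coe.lt
  have hnp : (0 : ℝ) < n - p := by simp_rw [sub_pos]; exact h2p
  have h0γ : (γ : ℝ) = p * (n - 1) / (n - p) :=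
    Real.coe_toNNReal _ (div_nonneg (by positivity) hnp.le)
  have hγmax : (γ : ℝ≥0∞) ≤ (max 1 γ : ℝ≥0) := by
    exact_mod_cast le_max_right 1 γ
  rcases hp.eq_or_lt with rfl|hp
  -- the case `p = 1`
  · have hp'n' : p' = n' := by
      rw [← NNReal.coe_inj, ← inv_inj, hp']
      simp [field, n', NNReal.conjExponent, *]
      rw [NNReal.coe_sub h1n]; simp [hn0]
    rw [hp'n']
    refine (my_one hu h2u hn).trans ?_
    calc eLpNorm (fderiv ℝ u) 1 μ = 1 * eLpNorm (fderiv ℝ u) 1 μ := (one_mul _).symm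
      _ ≤ (max 1 γ : ℝ≥0) * eLpNorm (fderiv ℝ u) 1 μ := by
          gcongr
          exact_mod_cast le_max_left 1 γ
  -- the case `p > 1`
  have hmu : Measurable u := hu.continuous.measurable
  have hmdu : Measurable fun x => (‖fderiv ℝ u x‖ₑ : ℝ≥0∞) := (measurable_fderiv ℝ u).enorm
  let q := Real.conjExponent p
  have hq : Real.HolderConjugate p q := .conjExponent hp
  have h0p : p ≠ 0 := zero_lt_one.trans hp |>.ne'
  have h1p : (p : ℝ) ≠ 1 := hq.lt.ne'
  have h3p : (p : ℝ) - 1 ≠ 0 := sub_ne_zero_of_ne h1p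
  have h0p' : p' ≠ 0 := hp'0
  have h2q : 1 / n' - 1 / q = 1 / p' := by
    simp_rw (config := {zeta := false}) [one_div, hp']
    rw [← hq.one_sub_inv, ← hn.coe.one_sub_inv, sub_sub_sub_cancel_left]
    simp only [NNReal.coe_natCast, NNReal.coe_inv]
  have h1γ : 1 < (γ : ℝ) := by
    rwa [h0γ, one_lt_div hnp, mul_sub, mul_one, sub_lt_sub_iff_right, lt_mul_iff_one_lt_left]
    exact hn.coe.pos
  have h2γ : γ * n' = p' := by
    rw [← NNReal.coe_inj, ← inv_inj, hp', NNReal.coe_mul, h0γ, hn.coe.conjugate_eq]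
    field_simp; push_cast; ring
  have h3γ : ((γ : ℝ) - 1) * q = p' := by
    rw [← inv_inj, hp', h0γ, hq.conjugate_eq]
    have : (p : ℝ) * (n - 1) - (n - p) = n * (p - 1) := by ring
    field_simp [this]; ring
  have h4γ : (γ : ℝ) ≠ 0 := (zero_lt_one.trans h1γ).ne'
  by_cases h3u : ∫⁻ x, ‖u x‖ₑ ^ (p' : ℝ) ∂μ = 0
  · rw [eLpNorm_nnreal_eq_lintegral h0p', h3u, ENNReal.zero_rpow_of_pos] <;> positivity
  have h4u : ∫⁻ x, ‖u x‖ₑ ^ (p' : ℝ) ∂μ ≠ ∞ := by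
    refine lintegral_rpow_enorm_lt_top_of_eLpNorm'_lt_top
      ((NNReal.coe_pos.trans pos_iff_ne_zero).mpr h0p') ?_ |>.ne
    rw [← eLpNorm_nnreal_eq_eLpNorm' h0p']
    exact hu.continuous.memLp_of_hasCompactSupport (μ := μ) h2u |>.eLpNorm_lt_top
  have h5u : (∫⁻ x, ‖u x‖ₑ ^ (p' : ℝ) ∂μ) ^ (1 / q) ≠ 0 :=
    ENNReal.rpow_pos (pos_iff_ne_zero.mpr h3u) h4u |>.ne'
  have h6u : (∫⁻ x, ‖u x‖ₑ ^ (p' : ℝ) ∂μ) ^ (1 / q) ≠ ∞ :=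
    ENNReal.rpow_ne_top_of_nonneg (div_nonneg zero_le_one hq.symm.nonneg) h4u
  let v : (ι → ℝ) → ℝ := fun x ↦ ‖u x‖ ^ (γ : ℝ)
  have hv : Differentiable ℝ v := hu.norm_rpow h1γ
  have h2v : HasCompactSupport v := h2u.norm.rpow_const h4γ
  have :=
  calc (∫⁻ x, ‖u x‖ₑ ^ (p' : ℝ) ∂μ) ^ (1 / (n' : ℝ)) = eLpNorm v n' μ := by
        rw [← h2γ, eLpNorm_nnreal_eq_lintegral hn.symm.pos.ne']
        simp (discharger := positivity) [v, Real.enorm_rpow_of_nonneg, ENNReal.rpow_mul,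
          ← ENNReal.coe_rpow_of_nonneg]
    _ ≤ eLpNorm (fderiv ℝ v) 1 μ := my_one hv h2v hn
    _ = ∫⁻ x, ‖fderiv ℝ v x‖ₑ ∂μ := by rw [eLpNorm_one_eq_lintegral_enorm]
    _ ≤ γ * ∫⁻ x, ‖u x‖ₑ ^ ((γ : ℝ) - 1) * ‖fderiv ℝ u x‖ₑ ∂μ := by
      rw [← lintegral_const_mul γ]
      gcongr with x
      · simp_rw [← mul_assoc]
        exact_mod_cast enorm_fderiv_norm_rpow_le hu (by exact_mod_cast h1γ)
      · exact (hmu.enorm.pow_const _).mul hmdu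
    _ ≤ γ * ((∫⁻ x, ‖u x‖ₑ ^ (p' : ℝ) ∂μ) ^ (1 / q) *
        (∫⁻ x, ‖fderiv ℝ u x‖ₑ ^ (p : ℝ) ∂μ) ^ (1 / (p : ℝ))) := by
        gcongr
        refine (ENNReal.lintegral_mul_le_Lp_mul_Lq μ hq.symm (f := fun x => ‖u x‖ₑ ^ ((γ : ℝ) - 1))
          (g := fun x => ‖fderiv ℝ u x‖ₑ) ?_ ?_).trans_eq ?_
        · exact (hmu.enorm.pow_const _).aemeasurable
        · exact hmdu.aemeasurable
        · simp only [← ENNReal.rpow_mul, h3γ]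
    _ = γ * (∫⁻ x, ‖fderiv ℝ u x‖ₑ ^ (p : ℝ) ∂μ) ^ (1 / (p : ℝ)) *
      (∫⁻ x, ‖u x‖ₑ ^ (p' : ℝ) ∂μ) ^ (1 / q) := by ring
  calc
    eLpNorm u p' μ
      = (∫⁻ x, ‖u x‖ₑ ^ (p' : ℝ) ∂μ) ^ (1 / (p' : ℝ)) := eLpNorm_nnreal_eq_lintegral h0p'
    _ ≤ γ * (∫⁻ x, ‖fderiv ℝ u x‖ₑ ^ (p : ℝ) ∂μ) ^ (1 / (p : ℝ)) := by
      rwa [← h2q, ENNReal.rpow_sub _ _ h3u h4u, ENNReal.div_le_iff h5u h6u]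
    _ = γ * eLpNorm (fderiv ℝ u) p μ := by
      rw [eLpNorm_nnreal_eq_lintegral h0p]
    _ ≤ (max 1 γ : ℝ≥0) * eLpNorm (fderiv ℝ u) p μ := by gcongr

section wtlemmas
variable {n : ℕ}

lemma sum_sq_add_one_pos (x : Fin n → ℝ) : 0 < (∑ i, x i ^ 2) + 1 := by positivity

lemma one_le_wt (x : Fin n → ℝ) : 1 ≤ wt x := by
  have h : Real.sqrt 1 ≤ wt x :=
    Real.sqrt_le_sqrt (le_add_of_nonneg_left (Finset.sum_nonneg fun i _ => sq_nonneg _))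
  simpa using h

lemma wt_pos (x : Fin n → ℝ) : 0 < wt x := lt_of_lt_of_le one_pos (one_le_wt x)

lemma wt_sq (x : Fin n → ℝ) : wt x ^ 2 = (∑ i, x i ^ 2) + 1 :=
  Real.sq_sqrt (sum_sq_add_one_pos x).le

lemma sum_abs_le_wt (x : Fin n → ℝ) : ∑ i, |x i| ≤ Real.sqrt n * wt x := by
  have h1 : (∑ i, |x i|) ^ 2 ≤ (n : ℝ) * ((∑ i, x i ^ 2) + 1) := by
    calc (∑ i, |x i|) ^ 2 ≤ ((Finset.univ : Finset (Fin n)).card : ℝ) * ∑ i, |x i| ^ 2 :=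
          sq_sum_le_card_mul_sum_sq
      _ = (n : ℝ) * ∑ i, x i ^ 2 := by
          simp [sq_abs, Finset.card_univ]
      _ ≤ (n : ℝ) * ((∑ i, x i ^ 2) + 1) := by
          apply mul_le_mul_of_nonneg_left (by linarith) (by positivity)
  calc ∑ i, |x i| = Real.sqrt ((∑ i, |x i|) ^ 2) := by
        rw [Real.sqrt_sq (by positivity)]
    _ ≤ Real.sqrt ((n : ℝ) * ((∑ i, x i ^ 2) + 1)) := Real.sqrt_le_sqrt h1
    _ = Real.sqrt n * wt x := by rw [Real.sqrt_mul (by positivity), wt]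

/-- The derivative of `∑ xᵢ²`. -/
noncomputable def Ssq (x : Fin n → ℝ) : (Fin n → ℝ) →L[ℝ] ℝ :=
  ∑ i, (2 * x i ^ 1) • ContinuousLinearMap.proj (R := ℝ) (φ := fun _ : Fin n => ℝ) i

lemma sumsq_hasFDerivAt (x : Fin n → ℝ) :
    HasFDerivAt (fun y : Fin n → ℝ => ∑ i, y i ^ 2) (Ssq x) x := by
  apply HasFDerivAt.fun_sum
  intro i _
  have h1 : HasFDerivAt (fun y : Fin n → ℝ => y i)
      (ContinuousLinearMap.proj (R := ℝ) (φ := fun _ : Fin n => ℝ) i) x :=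
    (ContinuousLinearMap.proj (R := ℝ) (φ := fun _ : Fin n => ℝ) i).hasFDerivAt
  have h2 := (hasDerivAt_pow 2 (x i)).comp_hasFDerivAt x h1
  exact h2.congr_fderiv (by norm_num)

lemma norm_Ssq_le (x : Fin n → ℝ) : ‖Ssq x‖ ≤ 2 * (Real.sqrt n * wt x) := by
  have hwt := wt_pos x
  apply ContinuousLinearMap.opNorm_le_bound _ (by positivity)
  intro v
  have happ : Ssq x v = ∑ i, (2 * x i ^ 1) * v i := by
    simp [Ssq, ContinuousLinearMap.sum_apply]
  rw [happ, Real.norm_eq_abs]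
  calc |∑ i, (2 * x i ^ 1) * v i| ≤ ∑ i, |2 * x i ^ 1 * v i| := Finset.abs_sum_le_sum_abs _ _
    _ = ∑ i, 2 * |x i| * |v i| := by
        congr 1 with i; rw [abs_mul, abs_mul]; simp [abs_of_nonneg]
    _ ≤ ∑ i, 2 * |x i| * ‖v‖ := by
        apply Finset.sum_le_sum
        intro i _
        apply mul_le_mul_of_nonneg_left _ (by positivity)
        simpa using norm_le_pi_norm v i
    _ = 2 * (∑ i, |x i|) * ‖v‖ := by rw [← Finset.sum_mul, ← Finset.mul_sum]
    _ ≤ 2 * (Real.sqrt n * wt x) * ‖v‖ := by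
        apply mul_le_mul_of_nonneg_right _ (norm_nonneg v)
        exact mul_le_mul_of_nonneg_left (sum_abs_le_wt x) (by norm_num)

/-- The derivative of `wt`. -/
noncomputable def Dwt (x : Fin n → ℝ) : (Fin n → ℝ) →L[ℝ] ℝ := (1 / (2 * wt x)) • Ssq x

lemma wt_hasFDerivAt (x : Fin n → ℝ) : HasFDerivAt wt (Dwt x) x := by
  have hsum : HasFDerivAt (fun y : Fin n → ℝ => (∑ i, y i ^ 2) + 1) (Ssq x) x :=
    (sumsq_hasFDerivAt x).add_const 1
  have hsqrt := (Real.hasDerivAt_sqrt (sum_sq_add_one_pos x).ne').comp_hasFDerivAt x hsum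
  exact hsqrt

lemma norm_Dwt_le (x : Fin n → ℝ) : ‖Dwt x‖ ≤ Real.sqrt n := by
  have hwt := wt_pos x
  calc ‖Dwt x‖ ≤ ‖(1 / (2 * wt x) : ℝ)‖ * ‖Ssq x‖ := ContinuousLinearMap.opNorm_smul_le _ _
    _ = 1 / (2 * wt x) * ‖Ssq x‖ := by
        rw [Real.norm_eq_abs, abs_of_pos (by positivity : (0:ℝ) < 1 / (2 * wt x))]
    _ ≤ 1 / (2 * wt x) * (2 * (Real.sqrt n * wt x)) :=
        mul_le_mul_of_nonneg_left (norm_Ssq_le x) (by positivity)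
    _ = Real.sqrt n := by field_simp

/-- Derivative of `wt ^ α`. -/
noncomputable def Dwta (α : ℝ) (x : Fin n → ℝ) : (Fin n → ℝ) →L[ℝ] ℝ :=
  (α * wt x ^ (α - 1)) • Dwt x

lemma wta_hasFDerivAt (α : ℝ) (x : Fin n → ℝ) :
    HasFDerivAt (fun y => wt y ^ α) (Dwta α x) x :=
  (wt_hasFDerivAt x).rpow_const (Or.inl (wt_pos x).ne')

lemma norm_Dwta_le (α : ℝ) (x : Fin n → ℝ) :
    ‖Dwta α x‖ ≤ |α| * Real.sqrt n * wt x ^ (α - 1) := by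
  have hwt := wt_pos x
  calc ‖Dwta α x‖ ≤ ‖(α * wt x ^ (α - 1) : ℝ)‖ * ‖Dwt x‖ :=
        ContinuousLinearMap.opNorm_smul_le _ _
    _ = |α| * wt x ^ (α - 1) * ‖Dwt x‖ := by
        rw [Real.norm_eq_abs, abs_mul, abs_of_pos (Real.rpow_pos_of_pos hwt _)]
    _ ≤ |α| * wt x ^ (α - 1) * Real.sqrt n :=
        mul_le_mul_of_nonneg_left (norm_Dwt_le x) (by positivity)
    _ = |α| * Real.sqrt n * wt x ^ (α - 1) := by ring

lemma wta_continuous (α : ℝ) : Continuous (fun y : Fin n → ℝ => wt y ^ α) := by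
  have : Differentiable ℝ (fun y : Fin n → ℝ => wt y ^ α) :=
    fun x => (wta_hasFDerivAt α x).differentiableAt
  exact this.continuous

lemma phi_hasFDerivAt {u : (Fin n → ℝ) → ℝ} (hu : Differentiable ℝ u) (α : ℝ) (x : Fin n → ℝ) :
    HasFDerivAt (fun y => wt y ^ α * u y)
      ((wt x ^ α) • fderiv ℝ u x + (u x) • Dwta α x) x :=
  (wta_hasFDerivAt α x).mul (hu x).hasFDerivAt

lemma phi_differentiable {u : (Fin n → ℝ) → ℝ} (hu : Differentiable ℝ u) (α : ℝ) :
    Differentiable ℝ (fun y => wt y ^ α * u y) :=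
  fun x => (phi_hasFDerivAt hu α x).differentiableAt

lemma norm_fderiv_phi_le {u : (Fin n → ℝ) → ℝ} (hu : Differentiable ℝ u) (α : ℝ) (x : Fin n → ℝ) :
    ‖fderiv ℝ (fun y => wt y ^ α * u y) x‖ ≤
      wt x ^ α * ‖fderiv ℝ u x‖ + (|α| * Real.sqrt n) * (wt x ^ (α - 1) * |u x|) := by
  have hwt := wt_pos x
  rw [(phi_hasFDerivAt hu α x).fderiv]
  calc ‖(wt x ^ α) • fderiv ℝ u x + (u x) • Dwta α x‖
      ≤ ‖(wt x ^ α) • fderiv ℝ u x‖ + ‖(u x) • Dwta α x‖ := norm_add_le _ _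
    _ ≤ ‖(wt x ^ α : ℝ)‖ * ‖fderiv ℝ u x‖ + ‖(u x : ℝ)‖ * ‖Dwta α x‖ :=
        add_le_add (ContinuousLinearMap.opNorm_smul_le _ _) (ContinuousLinearMap.opNorm_smul_le _ _)
    _ ≤ wt x ^ α * ‖fderiv ℝ u x‖ + (|α| * Real.sqrt n) * (wt x ^ (α - 1) * |u x|) := by
        rw [Real.norm_eq_abs, Real.norm_eq_abs, abs_of_pos (Real.rpow_pos_of_pos hwt _)]
        refine add_le_add le_rfl ?_
        calc |u x| * ‖Dwta α x‖ ≤ |u x| * (|α| * Real.sqrt n * wt x ^ (α - 1)) :=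
              mul_le_mul_of_nonneg_left (norm_Dwta_le α x) (abs_nonneg _)
          _ = (|α| * Real.sqrt n) * (wt x ^ (α - 1) * |u x|) := by ring

/-- Smooth cutoff profile: `1` for `t ≤ 1`, `0` for `t ≥ 4`. -/
noncomputable def psi (t : ℝ) : ℝ := Real.smoothTransition ((4 - t) / 3)

lemma psi_one {t : ℝ} (ht : t ≤ 1) : psi t = 1 :=
  Real.smoothTransition.one_of_one_le (by rw [le_div_iff₀ (by norm_num)]; linarith)

lemma psi_zero {t : ℝ} (ht : 4 ≤ t) : psi t = 0 :=
  Real.smoothTransition.zero_of_nonpos (by rw [div_nonpos_iff]; right; constructor <;> linarith)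

lemma psi_nonneg (t : ℝ) : 0 ≤ psi t := Real.smoothTransition.nonneg _

lemma psi_le_one (t : ℝ) : psi t ≤ 1 := Real.smoothTransition.le_one _

lemma psi_contDiff : ContDiff ℝ 1 psi :=
  Real.smoothTransition.contDiff.comp ((contDiff_const.sub contDiff_id).div_const 3)

lemma psi_hasDerivAt (t : ℝ) : HasDerivAt psi (deriv psi t) t :=
  ((psi_contDiff.differentiable one_ne_zero) t).hasDerivAt

lemma deriv_psi_zero_of_lt {t : ℝ} (ht : t < 1) : deriv psi t = 0 := by
  have h : psi =ᶠ[nhds t] fun _ => 1 := by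
    filter_upwards [Iio_mem_nhds ht] with s hs
    exact psi_one (le_of_lt hs)
  rw [h.deriv_eq, deriv_const]

lemma deriv_psi_zero_of_gt {t : ℝ} (ht : 4 < t) : deriv psi t = 0 := by
  have h : psi =ᶠ[nhds t] fun _ => 0 := by
    filter_upwards [Ioi_mem_nhds ht] with s hs
    exact psi_zero (le_of_lt hs)
  rw [h.deriv_eq, deriv_const]

lemma exists_deriv_psi_bound : ∃ M : ℝ, 0 ≤ M ∧ ∀ t, |deriv psi t| ≤ M := by
  have hcont : Continuous (deriv psi) := psi_contDiff.continuous_deriv le_rfl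
  have hsupp : HasCompactSupport (deriv psi) := by
    apply HasCompactSupport.intro (isCompact_Icc (a := (1:ℝ)) (b := 4))
    intro t ht
    rcases lt_or_ge t 1 with h | h
    · exact deriv_psi_zero_of_lt h
    · rcases lt_or_ge 4 t with h4 | h4
      · exact deriv_psi_zero_of_gt h4
      · exact absurd ⟨h, h4⟩ ht
  obtain ⟨M, hM⟩ := hsupp.exists_bound_of_continuous hcont
  exact ⟨max M 0, le_max_right _ _, fun t => (hM t).trans (le_max_left _ _)⟩

/-- Rescaled cutoff: equals `1` on `{∑ xᵢ² ≤ R²}`, vanishes off `{∑ xᵢ² ≤ 4R²}`. -/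
noncomputable def chi (R : ℝ) (x : Fin n → ℝ) : ℝ := psi (R⁻¹ ^ 2 * ∑ i, x i ^ 2)

lemma chi_hasFDerivAt (R : ℝ) (x : Fin n → ℝ) :
    HasFDerivAt (chi R)
      ((deriv psi (R⁻¹ ^ 2 * ∑ i, x i ^ 2) * R⁻¹ ^ 2) • Ssq x) x := by
  have hinner : HasFDerivAt (fun y : Fin n → ℝ => R⁻¹ ^ 2 * ∑ i, y i ^ 2)
      (R⁻¹ ^ 2 • Ssq x) x := (sumsq_hasFDerivAt x).const_mul (R⁻¹ ^ 2)
  have := (psi_hasDerivAt (R⁻¹ ^ 2 * ∑ i, x i ^ 2)).comp_hasFDerivAt x hinner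
  exact this.congr_fderiv (smul_smul _ _ _)
  

lemma chi_eq_one {R : ℝ} (hR : 0 < R) {x : Fin n → ℝ} (h : ∑ i, x i ^ 2 ≤ R ^ 2) :
    chi R x = 1 := by
  apply psi_one
  rw [inv_pow, inv_mul_le_iff₀ (by positivity), mul_one]
  exact h

lemma chi_eq_zero {R : ℝ} (hR : 0 < R) {x : Fin n → ℝ} (h : 4 * R ^ 2 ≤ ∑ i, x i ^ 2) :
    chi R x = 0 := by
  apply psi_zero
  rw [inv_pow, le_inv_mul_iff₀ (by positivity)]
  linarith

lemma chi_nonneg (R : ℝ) (x : Fin n → ℝ) : 0 ≤ chi R x := psi_nonneg _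
lemma chi_le_one (R : ℝ) (x : Fin n → ℝ) : chi R x ≤ 1 := psi_le_one _

lemma norm_fderiv_chi_le {M : ℝ} (hM : 0 ≤ M) (hMb : ∀ t, |deriv psi t| ≤ M)
    {R : ℝ} (hR : 1 ≤ R) (x : Fin n → ℝ) :
    ‖fderiv ℝ (chi R) x‖ ≤ 18 * M * Real.sqrt n * (wt x)⁻¹ := by
  have hR0 : (0 : ℝ) < R := lt_of_lt_of_le one_pos hR
  have hwt := wt_pos (n := n) x
  rw [(chi_hasFDerivAt R x).fderiv]
  set t := R⁻¹ ^ 2 * ∑ i, x i ^ 2 with hts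
  rcases lt_or_ge t 1 with h1 | h1
  · rw [deriv_psi_zero_of_lt h1, zero_mul, zero_smul, norm_zero]
    positivity
  rcases lt_or_ge 4 t with h4 | h4
  · rw [deriv_psi_zero_of_gt h4, zero_mul, zero_smul, norm_zero]
    positivity
  -- on the annulus : R² ≤ ∑ xᵢ² ≤ 4R²
  have hsum_ge : R ^ 2 ≤ ∑ i, x i ^ 2 := by
    rw [hts, inv_pow, le_inv_mul_iff₀ (by positivity), mul_one] at h1
    exact h1
  have hsum_le : ∑ i, x i ^ 2 ≤ 4 * R ^ 2 := by
    rw [hts, inv_pow, inv_mul_le_iff₀ (by positivity)] at h4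
    linarith
  have hwt_le : wt x ≤ 3 * R := by
    have h9 : wt x ^ 2 ≤ (3 * R) ^ 2 := by
      rw [wt_sq]
      nlinarith
    nlinarith [hwt, (by positivity : (0:ℝ) < 3 * R)]
  have hRinv : R⁻¹ ≤ 3 * (wt x)⁻¹ := by
    rw [inv_le_iff_one_le_mul₀ hR0]
    calc (1 : ℝ) = wt x * (wt x)⁻¹ := (mul_inv_cancel₀ hwt.ne').symm
      _ ≤ 3 * R * (wt x)⁻¹ := mul_le_mul_of_nonneg_right hwt_le (by positivity)
      _ = 3 * (wt x)⁻¹ * R := by ring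
  calc ‖(deriv psi t * R⁻¹ ^ 2) • Ssq x‖
      ≤ ‖(deriv psi t * R⁻¹ ^ 2 : ℝ)‖ * ‖Ssq x‖ := ContinuousLinearMap.opNorm_smul_le _ _
    _ ≤ (M * R⁻¹ ^ 2) * (2 * (Real.sqrt n * wt x)) := by
        apply mul_le_mul _ (norm_Ssq_le x) (norm_nonneg _) (by positivity)
        rw [Real.norm_eq_abs, abs_mul, abs_of_pos (by positivity : (0:ℝ) < R⁻¹ ^ 2)]
        exact mul_le_mul (hMb t) le_rfl (by positivity) hM
    _ ≤ (M * (3 * (wt x)⁻¹) ^ 2) * (2 * (Real.sqrt n * wt x)) := by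
        apply mul_le_mul_of_nonneg_right _ (by positivity)
        apply mul_le_mul_of_nonneg_left _ hM
        apply pow_le_pow_left₀ (by positivity) hRinv
    _ = 18 * M * Real.sqrt n * ((wt x)⁻¹ * ((wt x)⁻¹ * wt x)) := by ring
    _ = 18 * M * Real.sqrt n * (wt x)⁻¹ := by
        rw [inv_mul_cancel₀ hwt.ne', mul_one]

lemma chi_differentiable (R : ℝ) : Differentiable ℝ (chi (n := n) R) :=
  fun x => (chi_hasFDerivAt R x).differentiableAt

lemma chi_mul_hasCompactSupport {R : ℝ} (hR : 0 < R) (φ : (Fin n → ℝ) → ℝ) :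
    HasCompactSupport (fun x => chi R x * φ x) := by
  apply HasCompactSupport.intro (isCompact_closedBall (0 : Fin n → ℝ) (2 * R))
  intro x hx
  have hex : ∃ i, 2 * R < |x i| := by
    by_contra h
    push_neg at h
    apply hx
    rw [Metric.mem_closedBall, dist_zero_right]
    exact (pi_norm_le_iff_of_nonneg (by positivity)).mpr fun i => by
      rw [Real.norm_eq_abs]; exact h i
  obtain ⟨i, hi⟩ := hex
  have hsum : 4 * R ^ 2 ≤ ∑ j, x j ^ 2 := by
    have h1 : 4 * R ^ 2 ≤ x i ^ 2 := by nlinarith [abs_nonneg (x i), sq_abs (x i)]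
    exact h1.trans (Finset.single_le_sum (f := fun j => x j ^ 2)
      (fun j _ => sq_nonneg _) (Finset.mem_univ i))
  rw [chi_eq_zero hR hsum, zero_mul]

lemma chi_eventually_one (x : Fin n → ℝ) :
    ∀ᶠ k : ℕ in Filter.atTop, chi ((k : ℝ) + 1) x = 1 := by
  filter_upwards [Filter.eventually_ge_atTop (Nat.ceil (∑ i, x i ^ 2))] with k hk
  apply chi_eq_one (by positivity)
  calc ∑ i, x i ^ 2 ≤ (Nat.ceil (∑ i, x i ^ 2) : ℝ) := Nat.le_ceil _
    _ ≤ (k : ℝ) := by exact_mod_cast hk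
    _ ≤ ((k : ℝ) + 1) ^ 2 := by nlinarith [Nat.cast_nonneg (α := ℝ) k]

end wtlemmas

section mainlemmas
variable {n : ℕ}

lemma cutoff_deriv_bound {u : (Fin n → ℝ) → ℝ} (hu : Differentiable ℝ u) (α : ℝ)
    {M : ℝ} (hM : 0 ≤ M) (hMb : ∀ t, |deriv psi t| ≤ M) {R : ℝ} (hR : 1 ≤ R) (x : Fin n → ℝ) :
    ‖fderiv ℝ (fun y => chi R y * (wt y ^ α * u y)) x‖ ≤
      wt x ^ α * ‖fderiv ℝ u x‖ +
        (|α| * Real.sqrt n + 18 * M * Real.sqrt n) * (wt x ^ (α - 1) * |u x|) := by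
  have hwt := wt_pos x
  have hφd := phi_differentiable hu α
  have hprod : HasFDerivAt (fun y => chi R y * (wt y ^ α * u y))
      ((chi R x) • fderiv ℝ (fun y => wt y ^ α * u y) x +
        (wt x ^ α * u x) • fderiv ℝ (chi R) x) x :=
    ((chi_differentiable R) x).hasFDerivAt.mul (hφd x).hasFDerivAt
  rw [hprod.fderiv]
  have hchi_abs : |chi R x| ≤ 1 := abs_le.mpr ⟨by linarith [chi_nonneg R x], chi_le_one R x⟩
  have hrpow : wt x ^ α * (wt x)⁻¹ = wt x ^ (α - 1) := by
    rw [Real.rpow_sub hwt, Real.rpow_one, div_eq_mul_inv]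
  calc ‖(chi R x) • fderiv ℝ (fun y => wt y ^ α * u y) x +
        (wt x ^ α * u x) • fderiv ℝ (chi R) x‖
      ≤ ‖(chi R x) • fderiv ℝ (fun y => wt y ^ α * u y) x‖ +
        ‖(wt x ^ α * u x) • fderiv ℝ (chi R) x‖ := norm_add_le _ _
    _ ≤ |chi R x| * ‖fderiv ℝ (fun y => wt y ^ α * u y) x‖ +
        |wt x ^ α * u x| * ‖fderiv ℝ (chi R) x‖ := by
        refine add_le_add ?_ ?_
        · refine (ContinuousLinearMap.opNorm_smul_le _ _).trans ?_
          rw [Real.norm_eq_abs]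
        · refine (ContinuousLinearMap.opNorm_smul_le _ _).trans ?_
          rw [Real.norm_eq_abs]
    _ ≤ 1 * (wt x ^ α * ‖fderiv ℝ u x‖ + (|α| * Real.sqrt n) * (wt x ^ (α - 1) * |u x|)) +
        (wt x ^ α * |u x|) * (18 * M * Real.sqrt n * (wt x)⁻¹) := by
        refine add_le_add ?_ ?_
        · exact mul_le_mul hchi_abs (norm_fderiv_phi_le hu α x) (norm_nonneg _) one_pos.le
        · rw [abs_mul, abs_of_pos (Real.rpow_pos_of_pos hwt _)]
          exact mul_le_mul_of_nonneg_left (norm_fderiv_chi_le hM hMb hR x) (by positivity)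
    _ = wt x ^ α * ‖fderiv ℝ u x‖ +
        ((|α| * Real.sqrt n) * (wt x ^ (α - 1) * |u x|) +
          (18 * M * Real.sqrt n) * ((wt x ^ α * (wt x)⁻¹) * |u x|)) := by ring
    _ = wt x ^ α * ‖fderiv ℝ u x‖ +
        (|α| * Real.sqrt n + 18 * M * Real.sqrt n) * (wt x ^ (α - 1) * |u x|) := by
        rw [hrpow]; ring

end mainlemmas

/-- Weighted Sobolev embedding `W^{1,p}_α(ℝⁿ) ↪ W^{0,p*}_α(ℝⁿ)` for `1 < p < n`,
where `1/p* = 1/p - 1/n`, i.e. `p* = np/(n-p)`. -/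
theorem weighted_sobolev_embedding_subcritical
    (n : ℕ) (hn : 2 ≤ n) (p : ℝ) (α : ℝ) (hp1 : 1 < p) (hpn : p < n) :
    ∃ C > 0, ∀ u : (Fin n → ℝ) → ℝ, Differentiable ℝ u →
      MemLp (fun x => wt x ^ (α - 1) * u x) (ENNReal.ofReal p) volume →
      MemLp (fun x => wt x ^ α * ‖fderiv ℝ u x‖) (ENNReal.ofReal p) volume →
      MemLp (fun x => wt x ^ α * u x) (ENNReal.ofReal (n * p / (n - p))) volume ∧
        eLpNorm (fun x => wt x ^ α * u x) (ENNReal.ofReal (n * p / (n - p))) volume ≤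
          ENNReal.ofReal C *
            (eLpNorm (fun x => wt x ^ (α - 1) * u x) (ENNReal.ofReal p) volume +
              eLpNorm (fun x => wt x ^ α * ‖fderiv ℝ u x‖) (ENNReal.ofReal p) volume) := by
  classical
  have hp0 : 0 < p := lt_trans one_pos hp1
  have hnp : (0:ℝ) < (n:ℝ) - p := sub_pos.mpr hpn
  have hn0 : (0:ℝ) < (n:ℝ) := lt_trans hp0 hpn
  have hpn_coe : (p.toNNReal : ℝ) = p := Real.coe_toNNReal _ hp0.le
  have hp'r_pos : 0 < (n:ℝ) * p / ((n:ℝ) - p) := by positivity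
  have hp'n_coe : (((n:ℝ) * p / ((n:ℝ) - p)).toNNReal : ℝ) = (n:ℝ) * p / ((n:ℝ) - p) :=
    Real.coe_toNNReal _ hp'r_pos.le
  have hcard : 0 < Fintype.card (Fin n) := by simp; omega
  have hp'inv : ((((n:ℝ) * p / ((n:ℝ) - p)).toNNReal : ℝ))⁻¹ =
      ((p.toNNReal : ℝ))⁻¹ - ((Fintype.card (Fin n) : ℝ))⁻¹ := by
    rw [hp'n_coe, hpn_coe, Fintype.card_fin]
    field_simp
    
  have h1pn : 1 ≤ p.toNNReal := by
    rw [← NNReal.coe_le_coe, hpn_coe, NNReal.coe_one]; exact hp1.le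
  obtain ⟨C₀, hC₀pos, hGNS⟩ := my_gns (Fin n) h1pn hcard hp'inv
  obtain ⟨M, hM0, hMb⟩ := exists_deriv_psi_bound
  set K : ℝ := |α| * Real.sqrt n + 18 * M * Real.sqrt n with hK
  have hK0 : 0 ≤ K := by positivity
  refine ⟨(C₀ : ℝ) * (K + 1), by positivity, fun u hu hf1 hf2 => ?_⟩
  set pe : ℝ≥0∞ := ENNReal.ofReal p with hpe
  set pe' : ℝ≥0∞ := ENNReal.ofReal ((n:ℝ) * p / ((n:ℝ) - p)) with hpe'
  have hpe_coe : pe = (p.toNNReal : ℝ≥0∞) := rfl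
  have hpe'_coe : pe' = ((((n:ℝ) * p / ((n:ℝ) - p)).toNNReal : ℝ≥0)  : ℝ≥0∞) := rfl
  set f₁ := fun x : Fin n → ℝ => wt x ^ (α - 1) * u x with hf₁def
  set f₂ := fun x : Fin n → ℝ => wt x ^ α * ‖fderiv ℝ u x‖ with hf₂def
  set φ := fun x : Fin n → ℝ => wt x ^ α * u x with hφdef
  set A := eLpNorm f₁ pe volume with hA
  set B := eLpNorm f₂ pe volume with hB
  have hφcont : Continuous φ := (wta_continuous α).mul hu.continuous
  -- the uniform bound for the cut-off functions
  have key : ∀ k : ℕ, eLpNorm (fun x => chi ((k:ℝ) + 1) x * φ x) pe' volume ≤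
      ↑C₀ * (B + ENNReal.ofReal K * A) := by
    intro k
    have hR1 : (1:ℝ) ≤ (k:ℝ) + 1 := by
      have := Nat.cast_nonneg (α := ℝ) k; linarith
    have hR0 : (0:ℝ) < (k:ℝ) + 1 := lt_of_lt_of_le one_pos hR1
    have hwdiff : Differentiable ℝ (fun x => chi ((k:ℝ) + 1) x * φ x) :=
      (chi_differentiable _).mul (phi_differentiable hu α)
    have hwsupp : HasCompactSupport (fun x => chi ((k:ℝ) + 1) x * φ x) :=
      chi_mul_hasCompactSupport hR0 φ
    have step1 := hGNS _ hwdiff hwsupp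
    rw [← hpe_coe, ← hpe'_coe] at step1
    refine step1.trans ?_
    have step2 : eLpNorm (fderiv ℝ (fun x => chi ((k:ℝ) + 1) x * φ x)) pe volume ≤
        eLpNorm (fun x => f₂ x + K * (wt x ^ (α - 1) * |u x|)) pe volume := by
      apply eLpNorm_mono_real
      intro x
      exact cutoff_deriv_bound hu α hM0 hMb hR1 x
    have hpe1 : (1:ℝ≥0∞) ≤ pe := by
      rw [hpe]
      exact ENNReal.one_le_ofReal.mpr hp1.le
    have step3 : eLpNorm (fun x => f₂ x + K * (wt x ^ (α - 1) * |u x|)) pe volume ≤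
        B + ENNReal.ofReal K * A := by
      have hmf₂ : AEStronglyMeasurable f₂ volume := hf2.aestronglyMeasurable
      have haux : AEStronglyMeasurable (fun x : Fin n → ℝ => K * (wt x ^ (α - 1) * |u x|)) volume :=
        (continuous_const.mul ((wta_continuous (α - 1)).mul hu.continuous.abs)).aestronglyMeasurable
      refine (eLpNorm_add_le hmf₂ haux hpe1).trans ?_
      have heq1 : eLpNorm (fun x : Fin n → ℝ => K * (wt x ^ (α - 1) * |u x|)) pe volume =
          ‖K‖₊ * eLpNorm (fun x : Fin n → ℝ => wt x ^ (α - 1) * |u x|) pe volume := by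
        exact eLpNorm_const_smul (K : ℝ) (fun x : Fin n → ℝ => wt x ^ (α - 1) * |u x|) pe volume
      have heq2 : eLpNorm (fun x : Fin n → ℝ => wt x ^ (α - 1) * |u x|) pe volume = A := by
        rw [hA]
        apply eLpNorm_congr_norm_ae
        filter_upwards with x
        rw [Real.norm_eq_abs, Real.norm_eq_abs, hf₁def, abs_mul, abs_mul, abs_abs,
          abs_of_pos (Real.rpow_pos_of_pos (wt_pos x) _)]
      have heq3 : (‖K‖₊ : ℝ≥0∞) = ENNReal.ofReal K := (Real.enorm_eq_ofReal hK0)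
      rw [heq1, heq2, heq3]
    exact mul_le_mul_right (step2.trans step3) _
  -- pass to the limit
  have hbd : (C₀ : ℝ≥0∞) * (B + ENNReal.ofReal K * A) ≤
      ENNReal.ofReal ((C₀ : ℝ) * (K + 1)) * (A + B) := by
    rw [ENNReal.ofReal_mul (NNReal.coe_nonneg C₀), ENNReal.ofReal_coe_nnreal, mul_assoc]
    apply mul_le_mul_right
    rw [mul_add]
    refine le_trans (add_le_add ?_ ?_) (le_of_eq (add_comm _ _))
    · exact le_mul_of_one_le_left' (ENNReal.one_le_ofReal.mpr (by linarith))
    · exact mul_le_mul_left (ENNReal.ofReal_le_ofReal (by linarith)) _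
  have hmeasW : ∀ k : ℕ, AEStronglyMeasurable (fun x => chi ((k:ℝ) + 1) x * φ x) volume :=
    fun k => ((chi_differentiable _).continuous.mul hφcont).aestronglyMeasurable
  have hlim : ∀ᵐ x : (Fin n → ℝ) ∂volume,
      Filter.Tendsto (fun k : ℕ => chi ((k:ℝ) + 1) x * φ x) Filter.atTop (𝓝 (φ x)) := by
    filter_upwards with x
    apply Filter.Tendsto.congr' _ (tendsto_const_nhds (x := φ x))
    filter_upwards [chi_eventually_one x] with k hk
    rw [hk, one_mul]
  have hfatou := MeasureTheory.Lp.eLpNorm_lim_le_liminf_eLpNorm (p := pe') hmeasW φ hlim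
  have hliminf : Filter.atTop.liminf
      (fun k : ℕ => eLpNorm (fun x => chi ((k:ℝ) + 1) x * φ x) pe' volume) ≤
      (C₀ : ℝ≥0∞) * (B + ENNReal.ofReal K * A) := by
    refine le_trans (Filter.liminf_le_liminf (Filter.Eventually.of_forall key)) ?_
    simp [Filter.liminf_const]
  have hφ_bound : eLpNorm φ pe' volume ≤ ENNReal.ofReal ((C₀ : ℝ) * (K + 1)) * (A + B) :=
    hfatou.trans (hliminf.trans hbd)
  have hfin : ENNReal.ofReal ((C₀ : ℝ) * (K + 1)) * (A + B) < ⊤ := by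
    apply ENNReal.mul_lt_top ENNReal.ofReal_lt_top
    exact ENNReal.add_lt_top.mpr ⟨hf1.eLpNorm_lt_top, hf2.eLpNorm_lt_top⟩
  exact ⟨⟨hφcont.aestronglyMeasurable, lt_of_le_of_lt hφ_bound hfin⟩, hφ_bound⟩
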